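/- arXiv:1602.04866 — 3 statements merged into one kernel-verified Lean document; each statement's English description precedes it below -/
import Mathlib

section
/- Let λ > 0 satisfy tan λ + 2·tan(λ/2) = 0 and λ ∉ (π/2)·ℤ. Define functions on [0,1]: u₃(x) = u₄(x) = sin(λx), u₅(x) = u₆(x) = −sin(λx), and u₇(x) = (sin λ / sin(λ/2))·sin(λ(x − 1/2)). Then these functions are not all identically zero, each satisfies u_m'' = −λ²·u_m on [0,1], and they satisfy: u₃(0) = u₄(0) = u₅(0) = u₆(0) = 0; u₃(1) = u₄(1) = u₇(1); u₅(1) = u₆(1) = u₇(0); u₃'(0) + u₆'(0) = 0; u₄'(0) + u₅'(0) = 0; u₃'(1) + u₄'(1) + u₇'(1) = 0; and u₅'(1) + u₆'(1) − u₇'(0) = 0. -/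
private lemma hsinc (a c x : ℝ) :
    HasDerivAt (fun y => Real.sin (a * (y - c))) (a * Real.cos (a * (x - c))) x := by
  have h := (Real.hasDerivAt_sin (a * (x - c))).comp x
    (((hasDerivAt_id x).sub_const c).const_mul a)
  simpa [mul_comm, Function.comp_def] using h

private lemma hcosc (a c x : ℝ) :
    HasDerivAt (fun y => Real.cos (a * (y - c))) (-(a * Real.sin (a * (x - c)))) x := by
  have h := (Real.hasDerivAt_cos (a * (x - c))).comp x
    (((hasDerivAt_id x).sub_const c).const_mul a)
  simpa [mul_comm, Function.comp_def] using h

/-- The eigenfunction verification of Example 2 of the paper: for `λ` with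
`tan λ + 2 tan(λ/2) = 0`, `λ ∉ (π/2)ℤ`, the explicit functions
`u₃ = u₄ = sin(λx)`, `u₅ = u₆ = −sin(λx)`, `u₇ = (sin λ / sin(λ/2)) sin(λ(x−1/2))`
are not all identically zero, satisfy `u'' = −λ²u` on `[0,1]`, are continuous at the
vertices and satisfy the Kirchhoff conditions there. -/
theorem stmt4 (lam : ℝ) (hlam : 0 < lam)
    (htan : Real.tan lam + 2 * Real.tan (lam / 2) = 0)
    (hZ : ∀ n : ℤ, lam ≠ n * (Real.pi / 2))
    (u3 u4 u5 u6 u7 : ℝ → ℝ)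
    (h3 : ∀ x : ℝ, u3 x = Real.sin (lam * x))
    (h4 : ∀ x : ℝ, u4 x = Real.sin (lam * x))
    (h5 : ∀ x : ℝ, u5 x = -Real.sin (lam * x))
    (h6 : ∀ x : ℝ, u6 x = -Real.sin (lam * x))
    (h7 : ∀ x : ℝ, u7 x = Real.sin lam / Real.sin (lam / 2) * Real.sin (lam * (x - 1/2))) :
    (¬ ∀ x ∈ Set.Icc (0:ℝ) 1,
        u3 x = 0 ∧ u4 x = 0 ∧ u5 x = 0 ∧ u6 x = 0 ∧ u7 x = 0) ∧
    (∀ x ∈ Set.Icc (0:ℝ) 1, deriv (deriv u3) x = -lam ^ 2 * u3 x) ∧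
    (∀ x ∈ Set.Icc (0:ℝ) 1, deriv (deriv u4) x = -lam ^ 2 * u4 x) ∧
    (∀ x ∈ Set.Icc (0:ℝ) 1, deriv (deriv u5) x = -lam ^ 2 * u5 x) ∧
    (∀ x ∈ Set.Icc (0:ℝ) 1, deriv (deriv u6) x = -lam ^ 2 * u6 x) ∧
    (∀ x ∈ Set.Icc (0:ℝ) 1, deriv (deriv u7) x = -lam ^ 2 * u7 x) ∧
    u3 0 = 0 ∧ u4 0 = 0 ∧ u5 0 = 0 ∧ u6 0 = 0 ∧
    u3 1 = u4 1 ∧ u4 1 = u7 1 ∧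
    u5 1 = u6 1 ∧ u6 1 = u7 0 ∧
    deriv u3 0 + deriv u6 0 = 0 ∧
    deriv u4 0 + deriv u5 0 = 0 ∧
    deriv u3 1 + deriv u4 1 + deriv u7 1 = 0 ∧
    deriv u5 1 + deriv u6 1 - deriv u7 0 = 0 := by
  -- nonvanishing facts
  have hsinl : Real.sin lam ≠ 0 := by
    intro h
    obtain ⟨n, hn⟩ := Real.sin_eq_zero_iff.mp h
    exact hZ (2 * n) (by push_cast; linarith)
  have hsin2 : Real.sin (lam / 2) ≠ 0 := by
    intro h
    obtain ⟨n, hn⟩ := Real.sin_eq_zero_iff.mp h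
    exact hZ (4 * n) (by push_cast; linarith)
  have hcosl : Real.cos lam ≠ 0 := by
    intro h
    obtain ⟨n, hn⟩ := Real.cos_eq_zero_iff.mp h
    exact hZ (2 * n + 1) (by push_cast; linarith)
  have hcos2 : Real.cos (lam / 2) ≠ 0 := by
    intro h
    obtain ⟨n, hn⟩ := Real.cos_eq_zero_iff.mp h
    exact hZ (4 * n + 2) (by push_cast; linarith)
  -- key trig identity from the secular equation
  have key : Real.sin lam * Real.cos (lam / 2)
      = -2 * Real.sin (lam / 2) * Real.cos lam := by
    rw [Real.tan_eq_sin_div_cos, Real.tan_eq_sin_div_cos] at htan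
    field_simp at htan
    linarith
  set k : ℝ := Real.sin lam / Real.sin (lam / 2) with hk
  -- function identities
  have e3 : u3 = fun x => Real.sin (lam * (x - 0)) := by funext x; simp [h3]
  have e4 : u4 = fun x => Real.sin (lam * (x - 0)) := by funext x; simp [h4]
  have e5 : u5 = fun x => -Real.sin (lam * (x - 0)) := by funext x; simp [h5]
  have e6 : u6 = fun x => -Real.sin (lam * (x - 0)) := by funext x; simp [h6]
  have e7 : u7 = fun x => k * Real.sin (lam * (x - 1/2)) := by funext x; simp [h7, hk]
  -- first derivatives
  have dsin : ∀ c : ℝ, deriv (fun y => Real.sin (lam * (y - c)))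
      = fun x => lam * Real.cos (lam * (x - c)) := by
    intro c; funext x; exact (hsinc lam c x).deriv
  have dcos : ∀ c : ℝ, deriv (fun y => lam * Real.cos (lam * (y - c)))
      = fun x => lam * -(lam * Real.sin (lam * (x - c))) := by
    intro c; funext x; exact ((hcosc lam c x).const_mul lam).deriv
  have d3 : deriv u3 = fun x => lam * Real.cos (lam * (x - 0)) := by rw [e3, dsin]
  have d4 : deriv u4 = fun x => lam * Real.cos (lam * (x - 0)) := by rw [e4, dsin]
  have d5 : deriv u5 = fun x => -(lam * Real.cos (lam * (x - 0))) := by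
    rw [e5]; funext x; exact ((hsinc lam 0 x).neg).deriv
  have d6 : deriv u6 = fun x => -(lam * Real.cos (lam * (x - 0))) := by
    rw [e6]; funext x; exact ((hsinc lam 0 x).neg).deriv
  have d7 : deriv u7 = fun x => k * (lam * Real.cos (lam * (x - 1/2))) := by
    rw [e7]; funext x; exact ((hsinc lam (1/2) x).const_mul k).deriv
  -- second derivatives
  have dd3 : ∀ x : ℝ, deriv (deriv u3) x = -lam ^ 2 * Real.sin (lam * (x - 0)) := by
    intro x; rw [d3, dcos]; ring
  have dd4 : ∀ x : ℝ, deriv (deriv u4) x = -lam ^ 2 * Real.sin (lam * (x - 0)) := by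
    intro x; rw [d4, dcos]; ring
  have dd5 : ∀ x : ℝ, deriv (deriv u5) x = -lam ^ 2 * -Real.sin (lam * (x - 0)) := by
    intro x; rw [d5]
    have : deriv (fun y => -(lam * Real.cos (lam * (y - 0)))) x
        = -(lam * -(lam * Real.sin (lam * (x - 0)))) :=
      (((hcosc lam 0 x).const_mul lam).neg).deriv
    rw [this]; ring
  have dd6 : ∀ x : ℝ, deriv (deriv u6) x = -lam ^ 2 * -Real.sin (lam * (x - 0)) := by
    intro x; rw [d6]
    have : deriv (fun y => -(lam * Real.cos (lam * (y - 0)))) x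
        = -(lam * -(lam * Real.sin (lam * (x - 0)))) :=
      (((hcosc lam 0 x).const_mul lam).neg).deriv
    rw [this]; ring
  have dd7 : ∀ x : ℝ, deriv (deriv u7) x = -lam ^ 2 * (k * Real.sin (lam * (x - 1/2))) := by
    intro x; rw [d7]
    have : deriv (fun y => k * (lam * Real.cos (lam * (y - 1/2)))) x
        = k * (lam * -(lam * Real.sin (lam * (x - 1/2)))) := by
      have h := (((hcosc lam (1/2) x).const_mul lam).const_mul k).deriv
      simpa using h
    rw [this]; ring
  refine ⟨?_, ?_, ?_, ?_, ?_, ?_, ?_, ?_, ?_, ?_, ?_, ?_, ?_, ?_, ?_, ?_, ?_, ?_⟩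
  · intro H
    have := (H 1 ⟨zero_le_one, le_refl 1⟩).1
    rw [h3] at this
    simp only [mul_one] at this
    exact hsinl this
  · intro x _; rw [dd3, e3]
  · intro x _; rw [dd4, e4]
  · intro x _; rw [dd5, e5]
  · intro x _; rw [dd6, e6]
  · intro x _; rw [dd7, e7]
  · simp [h3]
  · simp [h4]
  · simp [h5]
  · simp [h6]
  · rw [h3, h4]
  · rw [h4, h7]; norm_num; rw [hk]; field_simp
  · rw [h5, h6]
  · rw [h6, h7]
    have : lam * ((0:ℝ) - 1/2) = -(lam / 2) := by ring
    rw [this, Real.sin_neg, hk]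
    field_simp
  · rw [d3, d6]; ring
  · rw [d4, d5]; ring
  · rw [d3, d4, d7]
    simp only [sub_zero, mul_one]
    have h1 : lam * ((1:ℝ) - 1/2) = lam / 2 := by ring
    rw [h1, hk]
    field_simp
    linear_combination lam * key
  · rw [d5, d6, d7]
    simp only [sub_zero, mul_one]
    have h1 : lam * ((0:ℝ) - 1/2) = -(lam / 2) := by ring
    rw [h1, Real.cos_neg, hk]
    field_simp
    linear_combination -lam * key
end

section
/- In the metric graph setup, let λ ∈ ℂ with Re λ > 0 and let v = (v_1, …, v_{K+M}) be an outgoing resonant state for λ with lead coefficients a_1, …, a_K, i.e. each v_m is C², v satisfies the Kirchhoff vertex conditions, −v_m'' = λ²·v_m on every edge, and v_k(x) = a_k·e^{iλx} on each lead e_k. Then Im(λ²) · Σ_{m=K+1}^{K+M} ∫₀^{ℓ_m} |v_m(x)|² dx = − Re λ · Σ_{k=1}^{K} |a_k|². In particular, if Im λ ≤ 0 then Σ_{k=1}^{K} |a_k|² = 2·|Im λ| · Σ_{m=K+1}^{K+M} ∫₀^{ℓ_m} |v_m|². -/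
open MeasureTheory
open scoped Classical

/-- A finite combinatorial graph with `K ≥ 1` infinite leads (each attached to a vertex
at `x = 0`) and `M` finite edges, each with two distinct endpoints. -/
structure QGraph where
  /-- vertex set -/
  V : Type
  fV : Fintype V
  /-- number of infinite leads -/
  K : ℕ
  /-- number of finite edges -/
  M : ℕ
  hK : 0 < K
  /-- the vertex to which lead `k` is attached (its `x = 0` end) -/
  leadV : Fin K → V
  /-- the `x = 0` endpoint of finite edge `m` -/
  ep0 : Fin M → V
  /-- the `x = ℓ_m` endpoint of finite edge `m` -/
  ep1 : Fin M → V
  ep_ne : ∀ m, ep0 m ≠ ep1 m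

attribute [instance] QGraph.fV

/-- A function on the metric graph: one function per lead and one per finite edge
(given as globally defined functions; only values on `[0,∞)` resp. `[0,ℓ_m]` matter). -/
structure GraphFun (G : QGraph) where
  lead : Fin G.K → ℝ → ℂ
  edge : Fin G.M → ℝ → ℂ

/-- All component functions are twice continuously differentiable. -/
def GraphFun.Smooth {G : QGraph} (u : GraphFun G) : Prop :=
  (∀ k, ContDiff ℝ 2 (u.lead k)) ∧ (∀ m, ContDiff ℝ 2 (u.edge m))

/-- Kirchhoff vertex conditions for edge lengths `ℓ`: continuity at each vertex
(a common vertex value) and vanishing of the sum of outward normal derivatives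
`∂_ν u_m(0) = −u_m'(0)`, `∂_ν u_m(ℓ_m) = u_m'(ℓ_m)` at each vertex. -/
def GraphFun.Kirchhoff {G : QGraph} (u : GraphFun G) (ℓ : Fin G.M → ℝ) : Prop :=
  (∃ val : G.V → ℂ,
    (∀ k, u.lead k 0 = val (G.leadV k)) ∧
    (∀ m, u.edge m 0 = val (G.ep0 m)) ∧
    (∀ m, u.edge m (ℓ m) = val (G.ep1 m))) ∧
  (∀ v : G.V,
    (∑ k ∈ Finset.univ.filter (fun k => G.leadV k = v), -(deriv (u.lead k) 0))
    + (∑ m ∈ Finset.univ.filter (fun m => G.ep0 m = v), -(deriv (u.edge m) 0))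
    + (∑ m ∈ Finset.univ.filter (fun m => G.ep1 m = v), deriv (u.edge m) (ℓ m)) = 0)

/-- The tuple does not vanish identically on the metric graph. -/
def GraphFun.Nontrivial {G : QGraph} (u : GraphFun G) (ℓ : Fin G.M → ℝ) : Prop :=
  (∃ k, ∃ x : ℝ, 0 ≤ x ∧ u.lead k x ≠ 0) ∨
  (∃ m, ∃ x ∈ Set.Icc (0:ℝ) (ℓ m), u.edge m x ≠ 0)

/-- `u` is an outgoing resonant state for `λ`: `C²`, Kirchhoff conditions,
`−u_m'' = λ² u_m` on every finite edge, and `u_k(x) = a_k e^{iλx}` on every lead. -/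
def IsResonantState (G : QGraph) (ℓ : Fin G.M → ℝ) (lam : ℂ) (u : GraphFun G) : Prop :=
  u.Smooth ∧ u.Kirchhoff ℓ ∧
  (∀ m, ∀ x ∈ Set.Icc (0:ℝ) (ℓ m), -(deriv (deriv (u.edge m)) x) = lam ^ 2 * u.edge m x) ∧
  (∃ a : Fin G.K → ℂ, ∀ k, ∀ x : ℝ, 0 ≤ x →
    u.lead k x = a k * Complex.exp (Complex.I * lam * (x : ℂ)))

/-- `λ` is a resonance of the Kirchhoff Laplacian: it admits a nonzero outgoing
resonant state. -/
def IsResonance (G : QGraph) (ℓ : Fin G.M → ℝ) (lam : ℂ) : Prop :=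
  ∃ u : GraphFun G, IsResonantState G ℓ lam u ∧ u.Nontrivial ℓ

/-- The squared `L²` norm of a tuple on the metric graph. -/
noncomputable def graphNormSq (G : QGraph) (ℓ : Fin G.M → ℝ) (u : GraphFun G) : ℝ :=
  (∑ k, ∫ x in Set.Ioi (0:ℝ), ‖u.lead k x‖ ^ 2) +
  ∑ m, ∫ x in (0:ℝ)..(ℓ m), ‖u.edge m x‖ ^ 2

/-- The squared `L²` norm of `(P − z)u = (−u_m'' − z·u_m)_m` on the metric graph. -/
noncomputable def graphDefectSq (G : QGraph) (ℓ : Fin G.M → ℝ) (z : ℂ) (u : GraphFun G) : ℝ :=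
  (∑ k, ∫ x in Set.Ioi (0:ℝ), ‖-(deriv (deriv (u.lead k)) x) - z * u.lead k x‖ ^ 2) +
  ∑ m, ∫ x in (0:ℝ)..(ℓ m), ‖-(deriv (deriv (u.edge m)) x) - z * u.edge m x‖ ^ 2

/-- `u` is supported in `[0, R]` on every infinite lead. -/
def LeadSupport (G : QGraph) (u : GraphFun G) (R : ℝ) : Prop :=
  ∀ k, ∀ x : ℝ, R < x → u.lead k x = 0



private lemma greens_edge (f : ℝ → ℂ) (L : ℝ) (hL : 0 ≤ L) (lam : ℂ) (hf : ContDiff ℝ 2 f)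
    (hode : ∀ x ∈ Set.Icc (0:ℝ) L, -(deriv (deriv f) x) = lam ^ 2 * f x) :
    lam ^ 2 * ((∫ x in (0:ℝ)..L, ‖f x‖ ^ 2 : ℝ) : ℂ)
      = ((∫ x in (0:ℝ)..L, ‖deriv f x‖ ^ 2 : ℝ) : ℂ)
        - ((starRingEnd ℂ) (f L) * deriv f L - (starRingEnd ℂ) (f 0) * deriv f 0) := by
  have hf1 : Differentiable ℝ f := hf.differentiable (by norm_num)
  have hf' : ContDiff ℝ 1 (deriv f) :=
    (contDiff_succ_iff_deriv.mp (by exact_mod_cast hf : ContDiff ℝ (1+1) f)).2.2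
  have hf'1 : Differentiable ℝ (deriv f) := hf'.differentiable (by norm_num)
  have hcf : Continuous f := hf1.continuous
  have hcf' : Continuous (deriv f) := hf'1.continuous
  have hcf'' : Continuous (deriv (deriv f)) :=
    (contDiff_succ_iff_deriv.mp (by exact_mod_cast hf' : ContDiff ℝ (0+1) (deriv f))).2.2.continuous
  have hF : ∀ x : ℝ, HasDerivAt (fun y => (starRingEnd ℂ) (f y) * deriv f y)
      ((starRingEnd ℂ) (deriv f x) * deriv f x + (starRingEnd ℂ) (f x) * deriv (deriv f) x) x := by
    intro x
    exact ((hf1 x).hasDerivAt.star.mul (hf'1 x).hasDerivAt)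
  have hInt : IntervalIntegrable
      (fun x => (starRingEnd ℂ) (deriv f x) * deriv f x + (starRingEnd ℂ) (f x) * deriv (deriv f) x)
      volume 0 L := by
    exact (((Complex.continuous_conj.comp hcf').mul hcf').add
      ((Complex.continuous_conj.comp hcf).mul hcf'')).intervalIntegrable 0 L
  have ftc := intervalIntegral.integral_eq_sub_of_hasDerivAt (fun x _ => hF x) hInt
  have key : ∫ x in (0:ℝ)..L, (starRingEnd ℂ) (f x) * (lam ^ 2 * f x)
      = ∫ x in (0:ℝ)..L, (starRingEnd ℂ) (f x) * (-(deriv (deriv f) x)) := by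
    apply intervalIntegral.integral_congr
    intro x hx
    rw [Set.uIcc_of_le hL] at hx
    simp only []
    rw [← hode x hx]
  have e1 : ∫ x in (0:ℝ)..L, (starRingEnd ℂ) (f x) * (lam ^ 2 * f x)
      = lam ^ 2 * ((∫ x in (0:ℝ)..L, ‖f x‖ ^ 2 : ℝ) : ℂ) := by
    rw [← intervalIntegral.integral_ofReal, ← intervalIntegral.integral_const_mul]
    apply intervalIntegral.integral_congr
    intro x _
    push_cast
    rw [← Complex.conj_mul']
    ring
  have e2 : ∫ x in (0:ℝ)..L, (starRingEnd ℂ) (f x) * (-(deriv (deriv f) x))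
      = ((∫ x in (0:ℝ)..L, ‖deriv f x‖ ^ 2 : ℝ) : ℂ)
        - ((starRingEnd ℂ) (f L) * deriv f L - (starRingEnd ℂ) (f 0) * deriv f 0) := by
    rw [← ftc, ← intervalIntegral.integral_ofReal, ← intervalIntegral.integral_sub]
    · apply intervalIntegral.integral_congr
      intro x _
      push_cast
      rw [← Complex.conj_mul']
      ring
    · exact (Continuous.intervalIntegrable (by continuity) 0 L)
    · exact hInt
  rw [← e1, key, e2]

private lemma lead_deriv (f : ℝ → ℂ) (a lam : ℂ) (hf : ContDiff ℝ 2 f)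
    (h : ∀ x : ℝ, 0 ≤ x → f x = a * Complex.exp (Complex.I * lam * (x:ℂ))) :
    deriv f 0 = Complex.I * lam * a := by
  have hd : HasDerivWithinAt f (deriv f 0) (Set.Ici (0:ℝ)) 0 :=
    ((hf.differentiable (by norm_num)).differentiableAt.hasDerivAt).hasDerivWithinAt
  have hg : HasDerivWithinAt (fun x : ℝ => a * Complex.exp (Complex.I * lam * (x:ℂ)))
      (Complex.I * lam * a) (Set.Ici (0:ℝ)) 0 := by
    have : HasDerivAt (fun x : ℝ => a * Complex.exp (Complex.I * lam * (x:ℂ)))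
        (a * (Complex.exp (Complex.I * lam * (0:ℝ)) * (Complex.I * lam))) 0 := by
      have h1 : HasDerivAt (fun x : ℝ => Complex.I * lam * (x:ℂ)) (Complex.I * lam) 0 := by
        simpa using (Complex.ofRealCLM.hasDerivAt (x := (0:ℝ))).const_mul (Complex.I * lam)
      simpa using ((h1.cexp)).const_mul a
    simpa [mul_comm, mul_assoc, mul_left_comm] using this.hasDerivWithinAt
  have hd' : HasDerivWithinAt f (Complex.I * lam * a) (Set.Ici (0:ℝ)) 0 :=
    hg.congr (fun x hx => h x hx) (h 0 le_rfl)
  have u := uniqueDiffOn_Ici (0:ℝ) 0 Set.self_mem_Ici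
  rw [← hd.derivWithin u, hd'.derivWithin u]

/-- Green's-formula identity for outgoing resonant states (from the proof of
Proposition 4.4 of the paper): if `Re λ > 0` and `v` is an outgoing resonant state
for `λ` with lead coefficients `a_k`, then
`Im(λ²)·Σ_m ∫₀^{ℓ_m} |v_m|² = −Re λ · Σ_k |a_k|²`; in particular, if `Im λ ≤ 0`
then `Σ_k |a_k|² = 2|Im λ|·Σ_m ∫ |v_m|²`. -/
theorem stmt5 (G : QGraph) (ℓ : Fin G.M → ℝ) (hℓ : ∀ m, 0 < ℓ m)
    (lam : ℂ) (hre : 0 < lam.re)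
    (v : GraphFun G) (a : Fin G.K → ℂ)
    (hsm : v.Smooth) (hk : v.Kirchhoff ℓ)
    (hode : ∀ m, ∀ x ∈ Set.Icc (0:ℝ) (ℓ m),
      -(deriv (deriv (v.edge m)) x) = lam ^ 2 * v.edge m x)
    (hlead : ∀ k, ∀ x : ℝ, 0 ≤ x →
      v.lead k x = a k * Complex.exp (Complex.I * lam * (x : ℂ))) :
    (lam ^ 2).im * ∑ m, ∫ x in (0:ℝ)..(ℓ m), ‖v.edge m x‖ ^ 2
      = -lam.re * ∑ k, ‖a k‖ ^ 2 ∧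
    (lam.im ≤ 0 →
      ∑ k, ‖a k‖ ^ 2
        = 2 * |lam.im| * ∑ m, ∫ x in (0:ℝ)..(ℓ m), ‖v.edge m x‖ ^ 2) := by
  classical
  have main : (lam ^ 2).im * ∑ m, ∫ x in (0:ℝ)..(ℓ m), ‖v.edge m x‖ ^ 2
      = -lam.re * ∑ k, ‖a k‖ ^ 2 := by
    obtain ⟨⟨val, hvl, hv0, hv1⟩, hkir⟩ := hk
    set S : ℝ := ∑ m, ∫ x in (0:ℝ)..(ℓ m), ‖v.edge m x‖ ^ 2 with hS
    set T : ℝ := ∑ m, ∫ x in (0:ℝ)..(ℓ m), ‖deriv (v.edge m) x‖ ^ 2 with hT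
    set A : ℝ := ∑ k, ‖a k‖ ^ 2 with hA
    have hval0 : ∀ k, v.lead k 0 = a k := by
      intro k
      have := hlead k 0 le_rfl
      simpa using this
    have hDk : ∀ k, deriv (v.lead k) 0 = Complex.I * lam * a k := fun k =>
      lead_deriv _ _ _ (hsm.1 k) (hlead k)
    have key : (∑ k, (starRingEnd ℂ) (val (G.leadV k)) * (-(deriv (v.lead k) 0)))
        + ((∑ m, (starRingEnd ℂ) (val (G.ep0 m)) * (-(deriv (v.edge m) 0)))
        + (∑ m, (starRingEnd ℂ) (val (G.ep1 m)) * (deriv (v.edge m) (ℓ m)))) = 0 := by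
      rw [← Finset.sum_fiberwise Finset.univ G.leadV
          (fun k => (starRingEnd ℂ) (val (G.leadV k)) * (-(deriv (v.lead k) 0))),
        ← Finset.sum_fiberwise Finset.univ G.ep0
          (fun m => (starRingEnd ℂ) (val (G.ep0 m)) * (-(deriv (v.edge m) 0))),
        ← Finset.sum_fiberwise Finset.univ G.ep1
          (fun m => (starRingEnd ℂ) (val (G.ep1 m)) * (deriv (v.edge m) (ℓ m)))]
      rw [← Finset.sum_add_distrib, ← Finset.sum_add_distrib]
      apply Finset.sum_eq_zero
      intro w _
      have r1 : ∑ k ∈ Finset.univ.filter (fun k => G.leadV k = w),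
          (starRingEnd ℂ) (val (G.leadV k)) * (-(deriv (v.lead k) 0))
          = (starRingEnd ℂ) (val w) *
            ∑ k ∈ Finset.univ.filter (fun k => G.leadV k = w), (-(deriv (v.lead k) 0)) := by
        rw [Finset.mul_sum]
        refine Finset.sum_congr rfl fun k hk => ?_
        rw [Finset.mem_filter] at hk
        rw [hk.2]
      have r2 : ∑ m ∈ Finset.univ.filter (fun m => G.ep0 m = w),
          (starRingEnd ℂ) (val (G.ep0 m)) * (-(deriv (v.edge m) 0))
          = (starRingEnd ℂ) (val w) *
            ∑ m ∈ Finset.univ.filter (fun m => G.ep0 m = w), (-(deriv (v.edge m) 0)) := by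
        rw [Finset.mul_sum]
        refine Finset.sum_congr rfl fun m hm => ?_
        rw [Finset.mem_filter] at hm
        rw [hm.2]
      have r3 : ∑ m ∈ Finset.univ.filter (fun m => G.ep1 m = w),
          (starRingEnd ℂ) (val (G.ep1 m)) * (deriv (v.edge m) (ℓ m))
          = (starRingEnd ℂ) (val w) *
            ∑ m ∈ Finset.univ.filter (fun m => G.ep1 m = w), (deriv (v.edge m) (ℓ m)) := by
        rw [Finset.mul_sum]
        refine Finset.sum_congr rfl fun m hm => ?_
        rw [Finset.mem_filter] at hm
        rw [hm.2]
      rw [r1, r2, r3]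
      linear_combination (starRingEnd ℂ) (val w) * hkir w
    have leadpart : (∑ k, (starRingEnd ℂ) (val (G.leadV k)) * (-(deriv (v.lead k) 0)))
        = -(Complex.I * lam * (A : ℂ)) := by
      rw [hA]
      push_cast
      rw [Finset.mul_sum, ← Finset.sum_neg_distrib]
      refine Finset.sum_congr rfl fun k _ => ?_
      rw [← hvl k, hval0 k, hDk k]
      have : ((‖a k‖ : ℂ)) ^ 2 = (starRingEnd ℂ) (a k) * a k := (Complex.conj_mul' (a k)).symm
      rw [this]
      ring
    have hbd : ∑ m, ((starRingEnd ℂ) (v.edge m (ℓ m)) * deriv (v.edge m) (ℓ m)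
          - (starRingEnd ℂ) (v.edge m 0) * deriv (v.edge m) 0)
        = Complex.I * lam * (A : ℂ) := by
      have hk2 := key
      rw [leadpart] at hk2
      have h2 : (∑ m, (starRingEnd ℂ) (val (G.ep0 m)) * (-(deriv (v.edge m) 0)))
          + (∑ m, (starRingEnd ℂ) (val (G.ep1 m)) * (deriv (v.edge m) (ℓ m)))
          = Complex.I * lam * (A : ℂ) := by linear_combination hk2
      rw [← h2, ← Finset.sum_add_distrib]
      refine Finset.sum_congr rfl fun m _ => ?_
      rw [← hv0 m, ← hv1 m]
      ring
    have total : lam ^ 2 * (S : ℂ) = (T : ℂ) - Complex.I * lam * (A : ℂ) := by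
      have hsum : ∑ m, (lam ^ 2 * ((∫ x in (0:ℝ)..(ℓ m), ‖v.edge m x‖ ^ 2 : ℝ) : ℂ))
          = ∑ m, (((∫ x in (0:ℝ)..(ℓ m), ‖deriv (v.edge m) x‖ ^ 2 : ℝ) : ℂ)
            - ((starRingEnd ℂ) (v.edge m (ℓ m)) * deriv (v.edge m) (ℓ m)
              - (starRingEnd ℂ) (v.edge m 0) * deriv (v.edge m) 0)) :=
        Finset.sum_congr rfl fun m _ =>
          greens_edge (v.edge m) (ℓ m) (hℓ m).le lam (hsm.2 m) (hode m)
      rw [← Finset.mul_sum] at hsum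
      rw [Finset.sum_sub_distrib, hbd] at hsum
      rw [hS, hT]
      push_cast
      linear_combination hsum
    have him := congrArg Complex.im total
    simp only [Complex.mul_im, Complex.sub_im, Complex.ofReal_im, Complex.ofReal_re,
      Complex.mul_re, Complex.I_re, Complex.I_im] at him
    rw [hS, hA] at *
    linarith [him]
  refine ⟨main, fun himle => ?_⟩
  have h2 : (lam ^ 2).im = 2 * lam.re * lam.im := by rw [sq, Complex.mul_im]; ring
  rw [h2] at main
  have h3 : 2 * lam.im * (∑ m, ∫ x in (0:ℝ)..(ℓ m), ‖v.edge m x‖ ^ 2)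
      = -(∑ k, ‖a k‖ ^ 2) := by
    apply mul_left_cancel₀ (ne_of_gt hre)
    linear_combination main
  rw [abs_of_nonpos himle]
  linarith
end

section
/- In the metric graph setup, fix the combinatorial graph, let the finite edge lengths be ℓ_m(t) with ℓ_m ∈ C¹(ℝ) and ℓ_m(0) > 0, let R > 0, and suppose λ₀ > 0 and λ₀² is an eigenvalue of P(0) with normalized eigenfunction u⁰ (a tuple with ‖u⁰‖ = 1, vanishing identically on every infinite lead, satisfying the Kirchhoff vertex conditions for the lengths ℓ_m(0) and −(u⁰_m)'' = λ₀²·u⁰_m on every edge). Then there exist constants C > 0 and t₀ > 0 such that for every t with |t| ≤ t₀ there exists a tuple u(t) of C² functions, supported in [0,R] on each infinite lead, satisfying the Kirchhoff vertex conditions for the lengths ℓ_m(t), with ‖u(t)‖ ≥ 1/2 and (Σ_m ∫ |−u(t)_m'' − λ₀²·u(t)_m|²)^{1/2} ≤ C·|t|. -/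
set_option maxHeartbeats 1000000

open MeasureTheory Set

lemma edge_quasimode (l : ℝ → ℝ) (hl : ContDiff ℝ 1 l) (hl0 : 0 < l 0)
    (w : ℝ → ℂ) (hw : ContDiff ℝ 2 w) (lam0 : ℝ)
    (hode : ∀ x ∈ Set.Icc (0:ℝ) (l 0),
      -(deriv (deriv w) x) = ((lam0 : ℂ)) ^ 2 * w x) :
    ∃ C : ℝ, 0 < C ∧ ∀ t : ℝ, |t| ≤ 1 / C →
      ∃ v : ℝ → ℂ, ContDiff ℝ 2 v ∧
        v 0 = w 0 ∧ deriv v 0 = deriv w 0 ∧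
        v (l t) = w (l 0) ∧ deriv v (l t) = deriv w (l 0) ∧
        (∫ x in (0:ℝ)..(l 0), ‖w x‖ ^ 2) - C * |t| ≤ (∫ x in (0:ℝ)..(l t), ‖v x‖ ^ 2) ∧
        (∫ x in (0:ℝ)..(l t), ‖-(deriv (deriv v) x) - ((lam0:ℂ))^2 * v x‖ ^ 2) ≤ C^2 * t^2 := by
  have two_eq : (2 : WithTop ℕ∞) = 1 + 1 := by norm_num
  -- basic differentiability facts for w
  have hwd : Differentiable ℝ w := hw.differentiable (by norm_num)
  have hw1 : ContDiff ℝ 1 (deriv w) := by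
    have := (contDiff_succ_iff_deriv.mp (two_eq ▸ hw)).2.2
    exact this
  have hwd1 : Differentiable ℝ (deriv w) := hw1.differentiable (by norm_num)
  have hwc2 : Continuous (deriv (deriv w)) := hw1.continuous_deriv le_rfl
  -- the cutoff
  set a : ℝ := l 0 / 3 with ha
  have ha0 : 0 < a := by positivity
  set χ : ℝ → ℝ := fun x => Real.smoothTransition ((x - a) / a) with hχdef
  have hχ2 : ContDiff ℝ 2 χ := by
    have h1 : ContDiff ℝ ((2:ℕ∞) : WithTop ℕ∞) (fun x : ℝ => (x - a) / a) :=
      (contDiff_id.sub contDiff_const).div_const a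
    have := Real.smoothTransition.contDiff.comp h1
    exact_mod_cast this
  have hχd : Differentiable ℝ χ := hχ2.differentiable (by norm_num)
  have hχ1c : ContDiff ℝ 1 (deriv χ) := by
    have := (contDiff_succ_iff_deriv.mp (two_eq ▸ hχ2)).2.2
    exact this
  have hχd1 : Differentiable ℝ (deriv χ) := hχ1c.differentiable (by norm_num)
  have hχc2 : Continuous (deriv (deriv χ)) := hχ1c.continuous_deriv le_rfl
  have hχ0 : ∀ x : ℝ, x ≤ a → χ x = 0 := fun x hx =>
    Real.smoothTransition.zero_of_nonpos (by
      apply div_nonpos_of_nonpos_of_nonneg <;> [linarith; linarith])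
  have hχone : ∀ x : ℝ, 2 * a ≤ x → χ x = 1 := fun x hx =>
    Real.smoothTransition.one_of_one_le (by rw [le_div_iff₀ ha0]; linarith)
  have hχmem : ∀ x : ℝ, 0 ≤ χ x ∧ χ x ≤ 1 := fun x =>
    ⟨Real.smoothTransition.nonneg _, Real.smoothTransition.le_one _⟩
  -- derivative of χ vanishes where χ is locally constant
  have hdχ0 : deriv χ 0 = 0 := by
    have hev : χ =ᶠ[nhds 0] fun _ => 0 :=
      Filter.eventuallyEq_of_mem (Iio_mem_nhds ha0) (fun y hy => hχ0 y (le_of_lt hy))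
    rw [hev.deriv_eq]; exact deriv_const _ _
  -- Lipschitz constant for l on [-1,1]
  obtain ⟨L0, hL0⟩ := (isCompact_Icc (a := (-1:ℝ)) (b := 1)).exists_bound_of_continuousOn
    ((hl.continuous_deriv le_rfl).continuousOn)
  set L : ℝ := max L0 0 with hLdef
  have hLnn : 0 ≤ L := le_max_right _ _
  have hL : ∀ t : ℝ, |t| ≤ 1 → |l t - l 0| ≤ L * |t| := by
    intro t ht
    have h1 : ∀ x ∈ Set.Icc (-1:ℝ) 1, DifferentiableAt ℝ l x :=
      fun x _ => (hl.differentiable (by norm_num)).differentiableAt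
    have h2 : ∀ x ∈ Set.Icc (-1:ℝ) 1, ‖deriv l x‖ ≤ L :=
      fun x hx => le_trans (hL0 x hx) (le_max_left _ _)
    have ht' : t ∈ Set.Icc (-1:ℝ) 1 := ⟨(abs_le.mp ht).1, (abs_le.mp ht).2⟩
    have := Convex.norm_image_sub_le_of_norm_deriv_le h1 h2 (convex_Icc _ _)
      (⟨by norm_num, by norm_num⟩ : (0:ℝ) ∈ Set.Icc (-1:ℝ) 1) ht'
    simpa [Real.norm_eq_abs] using this
  -- bounds on compact set J
  set J : Set ℝ := Set.Icc (-1 : ℝ) (l 0 + 2) with hJdef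
  have hJne : (0:ℝ) ∈ J := ⟨by norm_num, by linarith⟩
  obtain ⟨B0, hB0⟩ := (isCompact_Icc (a := (-1:ℝ)) (b := l 0 + 2)).exists_bound_of_continuousOn
    hw.continuous.continuousOn
  obtain ⟨B10, hB10⟩ := (isCompact_Icc (a := (-1:ℝ)) (b := l 0 + 2)).exists_bound_of_continuousOn
    (hw.continuous_deriv (by norm_num)).continuousOn
  obtain ⟨A10, hA10⟩ := (isCompact_Icc (a := (-1:ℝ)) (b := l 0 + 2)).exists_bound_of_continuousOn
    (hχ2.continuous_deriv (by norm_num)).continuousOn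
  obtain ⟨A20, hA20⟩ := (isCompact_Icc (a := (-1:ℝ)) (b := l 0 + 2)).exists_bound_of_continuousOn
    hχc2.continuousOn
  set B := max B0 0 with hBdef
  set B1 := max B10 0 with hB1def
  set A1 := max A10 0 with hA1def
  set A2 := max A20 0 with hA2def
  have hBnn : 0 ≤ B := le_max_right _ _
  have hB1nn : 0 ≤ B1 := le_max_right _ _
  have hA1nn : 0 ≤ A1 := le_max_right _ _
  have hA2nn : 0 ≤ A2 := le_max_right _ _
  have hB : ∀ x ∈ J, ‖w x‖ ≤ B := fun x hx => le_trans (hB0 x hx) (le_max_left _ _)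
  have hB1 : ∀ x ∈ J, ‖deriv w x‖ ≤ B1 := fun x hx => le_trans (hB10 x hx) (le_max_left _ _)
  have hA1 : ∀ x ∈ J, |deriv χ x| ≤ A1 := fun x hx => le_trans (hA10 x hx) (le_max_left _ _)
  have hA2 : ∀ x ∈ J, |deriv (deriv χ) x| ≤ A2 := fun x hx => le_trans (hA20 x hx) (le_max_left _ _)
  -- the constant
  set K : ℝ := lam0 ^ 2 * B * (3 * A1) + A2 * B1 with hKdef
  have hKnn : 0 ≤ K := by positivity
  set C : ℝ := 1 + L + 2 * L / a + L * A1 + (2 * B * B1 * (l 0 + 1) + B ^ 2) * L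
      + K * L * (l 0 + 1) with hCdef
  have hC1 : 1 ≤ C := by
    have h1 : 0 ≤ 2 * L / a := by positivity
    have h2 : 0 ≤ (2 * B * B1 * (l 0 + 1) + B ^ 2) * L := by positivity
    have h3 : 0 ≤ K * L * (l 0 + 1) := by positivity
    have h4 : 0 ≤ L * A1 := by positivity
    simp only [hCdef]; linarith
  have hCpos : 0 < C := lt_of_lt_of_le one_pos hC1
  refine ⟨C, hCpos, ?_⟩
  intro t ht
  -- smallness of δ
  set δ : ℝ := l t - l 0 with hδdef
  have ht1 : |t| ≤ 1 := le_trans ht (by rw [div_le_one hCpos]; exact hC1)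
  have hδL : |δ| ≤ L * |t| := hL t ht1
  have hLC : L * |t| ≤ L / C := by
    rw [div_eq_mul_inv, ← one_div]
    exact mul_le_mul_of_nonneg_left ht hLnn
  have hδ1 : |δ| ≤ 1 := by
    refine le_trans (hδL.trans hLC) ?_
    rw [div_le_one hCpos]; simp only [hCdef]
    have h1 : 0 ≤ 2 * L / a := by positivity
    have h2 : 0 ≤ (2 * B * B1 * (l 0 + 1) + B ^ 2) * L := by positivity
    have h3 : 0 ≤ K * L * (l 0 + 1) := by positivity
    have h4 : 0 ≤ L * A1 := by positivity
    linarith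
  have hδa : |δ| ≤ a / 2 := by
    refine le_trans (hδL.trans hLC) ?_
    rw [div_le_div_iff₀ hCpos (by norm_num : (0:ℝ) < 2)]
    have : 2 * L / a ≤ C := by
      simp only [hCdef]
      have h2 : 0 ≤ (2 * B * B1 * (l 0 + 1) + B ^ 2) * L := by positivity
      have h3 : 0 ≤ K * L * (l 0 + 1) := by positivity
      have h4 : 0 ≤ L * A1 := by positivity
      linarith
    calc L * 2 = (2 * L / a) * a := by field_simp
    _ ≤ C * a := mul_le_mul_of_nonneg_right this ha0.le
    _ = a * C := by ring
  have hδA1 : |δ| * A1 ≤ 1 := by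
    have : |δ| * A1 ≤ (L / C) * A1 :=
      mul_le_mul_of_nonneg_right (hδL.trans hLC) hA1nn
    refine le_trans this ?_
    rw [div_mul_eq_mul_div, div_le_one hCpos]
    simp only [hCdef]
    have h1 : 0 ≤ 2 * L / a := by positivity
    have h2 : 0 ≤ (2 * B * B1 * (l 0 + 1) + B ^ 2) * L := by positivity
    have h3 : 0 ≤ K * L * (l 0 + 1) := by positivity
    linarith
  have hl0a : l 0 = 3 * a := by rw [ha]; ring
  have hlt_lb : l 0 - a / 2 ≤ l t := by
    have := abs_le.mp hδa
    simp only [hδdef] at this; linarith [this.1]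
  have hlt_ub : l t ≤ l 0 + 1 := by
    have := abs_le.mp hδ1
    simp only [hδdef] at this; linarith [this.2]
  have hlt_pos : 0 < l t := by linarith [hl0a, ha0, hlt_lb]
  have hlt_2a : 2 * a < l t := by linarith [hl0a, ha0, hlt_lb]
  -- the deformation
  set φ : ℝ → ℝ := fun x => x - δ * χ x with hφdef
  set v : ℝ → ℂ := fun x => w (φ x) with hvdef
  have hφcd : ContDiff ℝ 2 φ := contDiff_id.sub (contDiff_const.mul hχ2)
  have hvsm : ContDiff ℝ 2 v := hw.comp hφcd
  -- φ maps [0, l t] into [0, l 0] and J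
  have hφJ : ∀ x, x ∈ Set.Icc (0:ℝ) (l t) → φ x ∈ Set.Icc (0:ℝ) (l 0) := by
    intro x hx
    have hχx := hχmem x
    have habs : |δ * χ x| ≤ |δ| := by
      rw [abs_mul, abs_of_nonneg hχx.1]
      calc |δ| * χ x ≤ |δ| * 1 := mul_le_mul_of_nonneg_left hχx.2 (abs_nonneg _)
      _ = |δ| := mul_one _
    constructor
    · by_cases hxa : x ≤ a
      · have : χ x = 0 := hχ0 x hxa
        simp only [hφdef, this, mul_zero, sub_zero]; exact hx.1
      · push_neg at hxa
        have := abs_le.mp habs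
        simp only [hφdef]; linarith [this.2]
    · by_cases hx2a : 2 * a ≤ x
      · have : χ x = 1 := hχone x hx2a
        simp only [hφdef, this, mul_one, hδdef]
        linarith [hx.2]
      · push_neg at hx2a
        have := abs_le.mp habs
        simp only [hφdef]
        rw [hl0a]; linarith [this.1, abs_le.mp hδa |>.1]
  have hJsub : Set.Icc (0:ℝ) (l 0) ⊆ J := fun x hx => ⟨by linarith [hx.1], by linarith [hx.2]⟩
  have hJsub2 : Set.Icc (0:ℝ) (l t) ⊆ J := fun x hx =>
    ⟨by linarith [hx.1], by linarith [hx.2, hlt_ub]⟩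
  -- derivatives of v
  have hφder : ∀ x, HasDerivAt φ (1 - δ * deriv χ x) x := by
    intro x
    exact (hasDerivAt_id x).sub (((hχd x).hasDerivAt).const_mul δ)
  have hvder : ∀ x, HasDerivAt v (((1 - δ * deriv χ x : ℝ) : ℂ) * deriv w (φ x)) x := by
    intro x
    have := ((hwd (φ x)).hasDerivAt).scomp x (hφder x)
    rw [Complex.real_smul] at this; exact this
  have hdv : deriv v = fun x => ((1 - δ * deriv χ x : ℝ) : ℂ) * deriv w (φ x) :=
    funext fun x => (hvder x).deriv
  have hvder2 : ∀ x, HasDerivAt (deriv v)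
      ((-(δ * deriv (deriv χ) x) : ℝ) * deriv w (φ x)
        + ((1 - δ * deriv χ x : ℝ) : ℂ) * (((1 - δ * deriv χ x : ℝ) : ℂ) * deriv (deriv w) (φ x))) x := by
    intro x
    rw [hdv]
    have h1 : HasDerivAt (fun y => ((1 - δ * deriv χ y : ℝ) : ℂ))
        ((-(δ * deriv (deriv χ) x) : ℝ)) x := by
      have : HasDerivAt (fun y => (1 - δ * deriv χ y : ℝ)) (-(δ * deriv (deriv χ) x)) x :=
        (((hχd1 x).hasDerivAt).const_mul δ).const_sub 1
      exact this.ofReal_comp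
    have h2 : HasDerivAt (fun y => deriv w (φ y))
        (((1 - δ * deriv χ x : ℝ) : ℂ) * deriv (deriv w) (φ x)) x := by
      have := ((hwd1 (φ x)).hasDerivAt).scomp x (hφder x)
      rw [Complex.real_smul] at this; exact this
    exact h1.mul h2
  have hddv : deriv (deriv v) = fun x =>
      ((-(δ * deriv (deriv χ) x) : ℝ) : ℂ) * deriv w (φ x)
        + ((1 - δ * deriv χ x : ℝ) : ℂ) * (((1 - δ * deriv χ x : ℝ) : ℂ) * deriv (deriv w) (φ x)) :=
    funext fun x => (hvder2 x).deriv
  -- endpoint values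
  have hχzero0 : χ 0 = 0 := hχ0 0 ha0.le
  have hφ0 : φ 0 = 0 := by simp [hφdef, hχzero0]
  have hv0 : v 0 = w 0 := by simp [hvdef, hφ0]
  have hφlt : φ (l t) = l 0 := by
    simp only [hφdef, hχone (l t) hlt_2a.le, mul_one, hδdef]; ring
  have hvlt : v (l t) = w (l 0) := by simp [hvdef, hφlt]
  have hdχlt : deriv χ (l t) = 0 := by
    have hev : χ =ᶠ[nhds (l t)] fun _ => 1 :=
      Filter.eventuallyEq_of_mem (Ioi_mem_nhds hlt_2a) (fun y hy => hχone y (le_of_lt hy))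
    rw [hev.deriv_eq]; exact deriv_const _ _
  have hdv0 : deriv v 0 = deriv w 0 := by
    rw [hdv]; simp [hdχ0, hφ0]
  have hdvlt : deriv v (l t) = deriv w (l 0) := by
    rw [hdv]; simp [hdχlt, hφlt]
  refine ⟨v, hvsm, hv0, hdv0, hvlt, hdvlt, ?_, ?_⟩
  · -- norm lower bound
    have hwc : Continuous fun x => ‖w x‖ ^ 2 := hw.continuous.norm.pow 2
    have hvc : Continuous fun x => ‖v x‖ ^ 2 :=
      ((hw.continuous.comp hφcd.continuous).norm).pow 2
    have hint1 : IntervalIntegrable (fun x => ‖w x‖ ^ 2) volume 0 (l t) :=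
      hwc.intervalIntegrable _ _
    have hint2 : IntervalIntegrable (fun x => ‖w x‖ ^ 2) volume (l t) (l 0) :=
      hwc.intervalIntegrable _ _
    have hint3 : IntervalIntegrable (fun x => ‖v x‖ ^ 2) volume 0 (l t) :=
      hvc.intervalIntegrable _ _
    have hadj : (∫ x in (0:ℝ)..(l t), ‖w x‖ ^ 2) + ∫ x in (l t)..(l 0), ‖w x‖ ^ 2
        = ∫ x in (0:ℝ)..(l 0), ‖w x‖ ^ 2 :=
      intervalIntegral.integral_add_adjacent_intervals hint1 hint2
    have hsub : (∫ x in (0:ℝ)..(l t), (‖v x‖ ^ 2 - ‖w x‖ ^ 2))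
        = (∫ x in (0:ℝ)..(l t), ‖v x‖ ^ 2) - ∫ x in (0:ℝ)..(l t), ‖w x‖ ^ 2 :=
      intervalIntegral.integral_sub hint3 hint1
    have hb1 : ‖∫ x in (l t)..(l 0), ‖w x‖ ^ 2‖ ≤ B ^ 2 * |δ| := by
      have hbd : ∀ x ∈ Set.uIoc (l t) (l 0), ‖(‖w x‖ ^ 2)‖ ≤ B ^ 2 := by
        intro x hx
        rcases Set.mem_uIoc.mp hx with h | h
        · have hxJ : x ∈ J := ⟨by linarith [h.1], by linarith [h.2]⟩
          rw [Real.norm_eq_abs, abs_of_nonneg (by positivity)]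
          exact pow_le_pow_left₀ (norm_nonneg _) (hB x hxJ) 2
        · have hxJ : x ∈ J := ⟨by linarith [h.1], by linarith [h.2, hlt_ub]⟩
          rw [Real.norm_eq_abs, abs_of_nonneg (by positivity)]
          exact pow_le_pow_left₀ (norm_nonneg _) (hB x hxJ) 2
      have := intervalIntegral.norm_integral_le_of_norm_le_const hbd
      have habs : |l 0 - l t| = |δ| := by rw [hδdef, abs_sub_comm]
      rw [habs] at this
      exact this
    have hb2 : ‖∫ x in (0:ℝ)..(l t), (‖v x‖ ^ 2 - ‖w x‖ ^ 2)‖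
        ≤ 2 * B * B1 * |δ| * (l 0 + 1) := by
      have hbd : ∀ x ∈ Set.uIoc (0:ℝ) (l t), ‖(‖v x‖ ^ 2 - ‖w x‖ ^ 2)‖ ≤ 2 * B * (B1 * |δ|) := by
        intro x hx
        rw [Set.uIoc_of_le hlt_pos.le] at hx
        have hxI : x ∈ Set.Icc (0:ℝ) (l t) := ⟨hx.1.le, hx.2⟩
        have hxJ : x ∈ J := hJsub2 hxI
        have hφxJ : φ x ∈ J := hJsub (hφJ x hxI)
        have hvb : ‖v x‖ ≤ B := hB _ hφxJ
        have hwb : ‖w x‖ ≤ B := hB _ hxJ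
        have hlip : ‖w (φ x) - w x‖ ≤ B1 * ‖φ x - x‖ :=
          Convex.norm_image_sub_le_of_norm_deriv_le
            (fun y _ => (hwd y)) (fun y hy => hB1 y hy) (convex_Icc _ _) hxJ hφxJ
        have hdist : ‖φ x - x‖ ≤ |δ| := by
          have : φ x - x = -(δ * χ x) := by simp only [hφdef]; ring
          rw [this, norm_neg, Real.norm_eq_abs, abs_mul, abs_of_nonneg (hχmem x).1]
          calc |δ| * χ x ≤ |δ| * 1 := mul_le_mul_of_nonneg_left (hχmem x).2 (abs_nonneg _)
          _ = |δ| := mul_one _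
        have hvw : ‖v x - w x‖ ≤ B1 * |δ| := by
          refine le_trans ?_ (le_trans hlip (mul_le_mul_of_nonneg_left hdist hB1nn))
          exact le_of_eq rfl
        have heq : ‖v x‖ ^ 2 - ‖w x‖ ^ 2 = (‖v x‖ - ‖w x‖) * (‖v x‖ + ‖w x‖) := by ring
        rw [Real.norm_eq_abs, heq, abs_mul]
        have h1 : |‖v x‖ - ‖w x‖| ≤ B1 * |δ| :=
          le_trans (abs_norm_sub_norm_le _ _) hvw
        have h2 : |‖v x‖ + ‖w x‖| ≤ 2 * B := by
          rw [abs_of_nonneg (by positivity)]; linarith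
        calc |‖v x‖ - ‖w x‖| * |‖v x‖ + ‖w x‖| ≤ (B1 * |δ|) * (2 * B) :=
          mul_le_mul h1 h2 (abs_nonneg _) (by positivity)
        _ = 2 * B * (B1 * |δ|) := by ring
      have := intervalIntegral.norm_integral_le_of_norm_le_const hbd
      refine le_trans this ?_
      have h1 : |l t - 0| ≤ l 0 + 1 := by
        rw [sub_zero, abs_of_pos hlt_pos]; exact hlt_ub
      calc 2 * B * (B1 * |δ|) * |l t - 0| ≤ 2 * B * (B1 * |δ|) * (l 0 + 1) :=
        mul_le_mul_of_nonneg_left h1 (by positivity)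
      _ = 2 * B * B1 * |δ| * (l 0 + 1) := by ring
    have key : (B ^ 2 + 2 * B * B1 * (l 0 + 1)) * |δ| ≤ C * |t| := by
      have h1 : (B ^ 2 + 2 * B * B1 * (l 0 + 1)) * |δ|
          ≤ (B ^ 2 + 2 * B * B1 * (l 0 + 1)) * (L * |t|) :=
        mul_le_mul_of_nonneg_left hδL (by positivity)
      have h2 : (B ^ 2 + 2 * B * B1 * (l 0 + 1)) * L ≤ C := by
        have he : (B ^ 2 + 2 * B * B1 * (l 0 + 1)) * L
            = (2 * B * B1 * (l 0 + 1) + B ^ 2) * L := by ring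
        rw [he]
        simp only [hCdef]
        have q1 : 0 ≤ 2 * L / a := by positivity
        have q3 : 0 ≤ K * L * (l 0 + 1) := by positivity
        have q4 : 0 ≤ L * A1 := by positivity
        linarith
      calc (B ^ 2 + 2 * B * B1 * (l 0 + 1)) * |δ|
          ≤ (B ^ 2 + 2 * B * B1 * (l 0 + 1)) * (L * |t|) := h1
      _ = ((B ^ 2 + 2 * B * B1 * (l 0 + 1)) * L) * |t| := by ring
      _ ≤ C * |t| := mul_le_mul_of_nonneg_right h2 (abs_nonneg _)
    have e1 := neg_abs_le (∫ x in (l t)..(l 0), ‖w x‖ ^ 2)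
    have e2 := neg_abs_le (∫ x in (0:ℝ)..(l t), (‖v x‖ ^ 2 - ‖w x‖ ^ 2))
    rw [Real.norm_eq_abs] at hb1 hb2
    have e3 := le_abs_self (∫ x in (l t)..(l 0), ‖w x‖ ^ 2)
    linarith
  · -- defect bound
    have hptwise : ∀ x ∈ Set.uIoc (0:ℝ) (l t),
        ‖(‖-(deriv (deriv v) x) - ((lam0:ℂ)) ^ 2 * v x‖ ^ 2)‖ ≤ (K * |δ|) ^ 2 := by
      intro x hx
      rw [Set.uIoc_of_le hlt_pos.le] at hx
      have hxI : x ∈ Set.Icc (0:ℝ) (l t) := ⟨hx.1.le, hx.2⟩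
      have hxJ : x ∈ J := hJsub2 hxI
      have hφmem : φ x ∈ Set.Icc (0:ℝ) (l 0) := hφJ x hxI
      have hφxJ : φ x ∈ J := hJsub hφmem
      have hw2 : deriv (deriv w) (φ x) = -(((lam0:ℂ)) ^ 2 * w (φ x)) := by
        have := hode (φ x) hφmem
        linear_combination -this
      have hr : |δ * deriv χ x| ≤ |δ| * A1 := by
        rw [abs_mul]
        exact mul_le_mul_of_nonneg_left (hA1 x hxJ) (abs_nonneg _)
      have hr1 : |δ * deriv χ x| ≤ 1 := le_trans hr hδA1
      have hgx : -(deriv (deriv v) x) - ((lam0:ℂ)) ^ 2 * v x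
          = ((lam0:ℂ)) ^ 2 * w (φ x) * ((((1 - δ * deriv χ x : ℝ)) : ℂ) ^ 2 - 1)
            + (((δ * deriv (deriv χ) x : ℝ)) : ℂ) * deriv w (φ x) := by
        rw [hddv]; simp only [hvdef]
        rw [hw2]
        push_cast
        ring
      rw [hgx]
      have ha1 : ‖((lam0:ℂ)) ^ 2‖ = lam0 ^ 2 := by
        rw [norm_pow, Complex.norm_real, Real.norm_eq_abs, sq_abs]
      have ha2 : ‖w (φ x)‖ ≤ B := hB _ hφxJ
      have ha3 : ‖(((1 - δ * deriv χ x : ℝ)) : ℂ) ^ 2 - 1‖ ≤ 3 * (|δ| * A1) := by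
        have hcast : (((1 - δ * deriv χ x : ℝ)) : ℂ) ^ 2 - 1
            = (((1 - δ * deriv χ x) ^ 2 - 1 : ℝ) : ℂ) := by push_cast; ring
        rw [hcast, Complex.norm_real, Real.norm_eq_abs]
        have heq2 : (1 - δ * deriv χ x) ^ 2 - 1
            = (δ * deriv χ x) * (δ * deriv χ x - 2) := by ring
        rw [heq2, abs_mul]
        have h4 : |δ * deriv χ x - 2| ≤ 3 := by
          have h5 := abs_le.mp hr1
          rw [abs_le]; constructor <;> linarith [h5.1, h5.2]
        calc |δ * deriv χ x| * |δ * deriv χ x - 2| ≤ (|δ| * A1) * 3 :=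
          mul_le_mul hr h4 (abs_nonneg _) (by positivity)
        _ = 3 * (|δ| * A1) := by ring
      have hn1 : ‖((lam0:ℂ)) ^ 2 * w (φ x) * ((((1 - δ * deriv χ x : ℝ)) : ℂ) ^ 2 - 1)‖
          ≤ lam0 ^ 2 * B * (3 * (|δ| * A1)) := by
        rw [norm_mul, norm_mul, ha1]
        exact mul_le_mul (mul_le_mul_of_nonneg_left ha2 (sq_nonneg lam0)) ha3
          (norm_nonneg _) (by positivity)
      have hn2 : ‖(((δ * deriv (deriv χ) x : ℝ)) : ℂ) * deriv w (φ x)‖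
          ≤ |δ| * A2 * B1 := by
        rw [norm_mul, Complex.norm_real, Real.norm_eq_abs, abs_mul]
        exact mul_le_mul (mul_le_mul_of_nonneg_left (hA2 x hxJ) (abs_nonneg _))
          (hB1 _ hφxJ) (norm_nonneg _) (by positivity)
      have htot : ‖((lam0:ℂ)) ^ 2 * w (φ x) * ((((1 - δ * deriv χ x : ℝ)) : ℂ) ^ 2 - 1)
          + (((δ * deriv (deriv χ) x : ℝ)) : ℂ) * deriv w (φ x)‖ ≤ K * |δ| := by
        refine le_trans (norm_add_le _ _) ?_
        have hKe : lam0 ^ 2 * B * (3 * (|δ| * A1)) + |δ| * A2 * B1 = K * |δ| := by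
          rw [hKdef]; ring
        linarith
      rw [Real.norm_eq_abs, abs_of_nonneg (by positivity)]
      exact pow_le_pow_left₀ (norm_nonneg _) htot 2
    have hbig := intervalIntegral.norm_integral_le_of_norm_le_const hptwise
    have hle : (∫ x in (0:ℝ)..(l t), ‖-(deriv (deriv v) x) - ((lam0:ℂ)) ^ 2 * v x‖ ^ 2)
        ≤ (K * |δ|) ^ 2 * |l t - 0| := le_trans (le_abs_self _) hbig
    refine le_trans hle ?_
    have h1 : |l t - 0| ≤ l 0 + 1 := by rw [sub_zero, abs_of_pos hlt_pos]; exact hlt_ub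
    have h2 : K * |δ| ≤ K * (L * |t|) := mul_le_mul_of_nonneg_left hδL hKnn
    have h3 : (K * |δ|) ^ 2 ≤ (K * (L * |t|)) ^ 2 :=
      pow_le_pow_left₀ (by positivity) h2 2
    have e1 : (K * |δ|) ^ 2 * |l t - 0| ≤ (K * (L * |t|)) ^ 2 * (l 0 + 1) :=
      mul_le_mul h3 h1 (abs_nonneg _) (by positivity)
    refine le_trans e1 ?_
    have hKLC : K * L * (l 0 + 1) ≤ C := by
      simp only [hCdef]
      have q1 : 0 ≤ 2 * L / a := by positivity
      have q2 : 0 ≤ (2 * B * B1 * (l 0 + 1) + B ^ 2) * L := by positivity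
      have q4 : 0 ≤ L * A1 := by positivity
      linarith
    have heq : (K * (L * |t|)) ^ 2 * (l 0 + 1) = (K * L) ^ 2 * (l 0 + 1) * t ^ 2 := by
      rw [mul_pow, mul_pow, sq_abs]; ring
    rw [heq]
    have h4 : (K * L) ^ 2 * (l 0 + 1) ≤ (K * L * (l 0 + 1)) ^ 2 := by
      have e : (K * L * (l 0 + 1)) ^ 2 = (K * L) ^ 2 * (l 0 + 1) * (l 0 + 1) := by ring
      rw [e]
      exact le_mul_of_one_le_right (by positivity) (by linarith)
    have h5 : (K * L * (l 0 + 1)) ^ 2 ≤ C ^ 2 :=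
      pow_le_pow_left₀ (by positivity) hKLC 2
    have h6 : (K * L) ^ 2 * (l 0 + 1) ≤ C ^ 2 := le_trans h4 h5
    exact mul_le_mul_of_nonneg_right h6 (sq_nonneg t)

open MeasureTheory
open scoped Classical

/-- The quasimode construction of the Example after Theorem 2 of the paper: given a
normalized eigenfunction `u⁰` of `P(0)` with eigenvalue `λ₀² > 0` (vanishing on all
leads) and `C¹` length families `ℓ_m(t)` with `ℓ_m(0) > 0`, there are `C, t₀ > 0` such
that for `|t| ≤ t₀` there is a tuple `u(t)`, `C²`, supported in `[0,R]` on each lead,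
satisfying the Kirchhoff conditions for the lengths `ℓ_m(t)`, with `‖u(t)‖ ≥ 1/2` and
`‖(P(t) − λ₀²)u(t)‖ ≤ C|t|`. -/
theorem stmt9 (G : QGraph) (ℓ : Fin G.M → ℝ → ℝ)
    (hℓC1 : ∀ m, ContDiff ℝ 1 (ℓ m)) (hℓ0 : ∀ m, 0 < ℓ m 0)
    (R : ℝ) (hR : 0 < R) (lam0 : ℝ) (hlam0 : 0 < lam0)
    (u0 : GraphFun G)
    (hsm : u0.Smooth) (hk : u0.Kirchhoff (fun m => ℓ m 0))
    (hode : ∀ m, ∀ x ∈ Set.Icc (0:ℝ) (ℓ m 0),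
      -(deriv (deriv (u0.edge m)) x) = ((lam0 : ℂ)) ^ 2 * u0.edge m x)
    (hlead : ∀ k, ∀ x : ℝ, 0 ≤ x → u0.lead k x = 0)
    (hnorm : graphNormSq G (fun m => ℓ m 0) u0 = 1) :
    ∃ C : ℝ, 0 < C ∧ ∃ t₀ : ℝ, 0 < t₀ ∧
      ∀ t : ℝ, |t| ≤ t₀ →
        ∃ u : GraphFun G,
          u.Smooth ∧ u.Kirchhoff (fun m => ℓ m t) ∧ LeadSupport G u R ∧
          (1 / 2 : ℝ) ≤ Real.sqrt (graphNormSq G (fun m => ℓ m t) u) ∧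
          Real.sqrt (graphDefectSq G (fun m => ℓ m t) ((lam0 : ℂ) ^ 2) u) ≤ C * |t| := by
  classical
  -- lead functions vanish on (0,∞), together with their derivatives
  have hld1 : ∀ k, ∀ x : ℝ, 0 < x → deriv (u0.lead k) x = 0 := by
    intro k x hx
    have hev : u0.lead k =ᶠ[nhds x] fun _ => 0 :=
      Filter.eventuallyEq_of_mem (Ioi_mem_nhds hx) (fun y hy => hlead k y (le_of_lt hy))
    rw [hev.deriv_eq]; exact deriv_const _ _
  have hld2 : ∀ k, ∀ x : ℝ, 0 < x → deriv (deriv (u0.lead k)) x = 0 := by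
    intro k x hx
    have hev : deriv (u0.lead k) =ᶠ[nhds x] fun _ => 0 :=
      Filter.eventuallyEq_of_mem (Ioi_mem_nhds hx) (fun y hy => hld1 k y hy)
    rw [hev.deriv_eq]; exact deriv_const _ _
  have hleadnorm : ∀ k, (∫ x in Set.Ioi (0:ℝ), ‖u0.lead k x‖ ^ 2) = 0 := by
    intro k
    rw [MeasureTheory.setIntegral_congr_fun measurableSet_Ioi
      (fun x hx => by simp [hlead k x (le_of_lt hx)] : Set.EqOn _ (fun _ => (0:ℝ)) _)]
    simp
  have hleaddef : ∀ k, (∫ x in Set.Ioi (0:ℝ),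
      ‖-(deriv (deriv (u0.lead k)) x) - ((lam0:ℂ)^2) * u0.lead k x‖ ^ 2) = 0 := by
    intro k
    rw [MeasureTheory.setIntegral_congr_fun measurableSet_Ioi
      (fun x hx => by
        simp [hld2 k x hx, hlead k x (le_of_lt hx)] : Set.EqOn _ (fun _ => (0:ℝ)) _)]
    simp
  -- the total mass sits on the edges
  have hsum : ∑ m, (∫ x in (0:ℝ)..(ℓ m 0), ‖u0.edge m x‖ ^ 2) = 1 := by
    have := hnorm
    unfold graphNormSq at this
    rw [Finset.sum_congr rfl (fun k _ => hleadnorm k)] at this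
    simpa using this
  -- there is at least one edge
  have hM : 0 < G.M := by
    rcases Nat.eq_zero_or_pos G.M with h0 | h
    · exfalso
      haveI : IsEmpty (Fin G.M) := ⟨fun i => absurd i.2 (by omega)⟩
      rw [Finset.univ_eq_empty, Finset.sum_empty] at hsum
      norm_num at hsum
    · exact h
  -- apply the edge construction to every edge
  have hE := fun m : Fin G.M =>
    edge_quasimode (ℓ m) (hℓC1 m) (hℓ0 m) (u0.edge m) (hsm.2 m) lam0 (hode m)
  choose Cm hCmpos hCm using hE
  have hne : (Finset.univ : Finset (Fin G.M)).Nonempty := ⟨⟨0, hM⟩, Finset.mem_univ _⟩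
  set S : ℝ := ∑ m, Cm m with hSdef
  have hSpos : 0 < S := Finset.sum_pos (fun m _ => hCmpos m) hne
  set Q : ℝ := Real.sqrt (∑ m, (Cm m) ^ 2) with hQdef
  refine ⟨max 1 Q, lt_of_lt_of_le one_pos (le_max_left _ _), ?_⟩
  set t₀ : ℝ := min (Finset.univ.inf' hne (fun m => 1 / Cm m)) (1 / (2 * S)) with ht₀def
  have ht₀pos : 0 < t₀ := by
    apply lt_min
    · rw [Finset.lt_inf'_iff]
      intro m _
      have := hCmpos m
      positivity
    · positivity
  refine ⟨t₀, ht₀pos, ?_⟩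
  intro t ht
  have htm : ∀ m, |t| ≤ 1 / Cm m := fun m =>
    le_trans ht (le_trans (min_le_left _ _) (Finset.inf'_le _ (Finset.mem_univ m)))
  have htS : |t| ≤ 1 / (2 * S) := le_trans ht (min_le_right _ _)
  choose v hvsm hv0 hvd0 hvl hvdl hvnorm hvdef using fun m => hCm m t (htm m)
  refine ⟨⟨u0.lead, v⟩, ⟨hsm.1, hvsm⟩, ?_, ?_, ?_, ?_⟩
  · -- Kirchhoff conditions
    obtain ⟨⟨val, hval1, hval2, hval3⟩, hsum0⟩ := hk
    constructor
    · exact ⟨val, hval1, fun m => (hv0 m).trans (hval2 m), fun m => (hvl m).trans (hval3 m)⟩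
    · intro vtx
      have h2 : ∑ m ∈ Finset.univ.filter (fun m => G.ep0 m = vtx),
          -(deriv ((⟨u0.lead, v⟩ : GraphFun G).edge m) 0)
          = ∑ m ∈ Finset.univ.filter (fun m => G.ep0 m = vtx),
            -(deriv (u0.edge m) 0) :=
        Finset.sum_congr rfl (fun m _ => by dsimp only; rw [hvd0 m])
      have h3 : ∑ m ∈ Finset.univ.filter (fun m => G.ep1 m = vtx),
          deriv ((⟨u0.lead, v⟩ : GraphFun G).edge m) (ℓ m t)
          = ∑ m ∈ Finset.univ.filter (fun m => G.ep1 m = vtx),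
            deriv (u0.edge m) (ℓ m 0) :=
        Finset.sum_congr rfl (fun m _ => by dsimp only; rw [hvdl m])
      have h0 := hsum0 vtx
      dsimp only at h2 h3 ⊢
      rw [h2, h3]
      exact h0
  · -- lead support
    intro k x hx
    exact hlead k x (le_trans hR.le hx.le)
  · -- norm lower bound
    have hnormlow : (1 / 4 : ℝ) ≤ graphNormSq G (fun m => ℓ m t) ⟨u0.lead, v⟩ := by
      unfold graphNormSq
      dsimp only
      have hlz : ∑ k, (∫ x in Set.Ioi (0:ℝ), ‖u0.lead k x‖ ^ 2) = 0 := by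
        rw [Finset.sum_congr rfl (fun k _ => hleadnorm k)]
        simp
      rw [hlz, zero_add]
      have hedge : ∑ m, ((∫ x in (0:ℝ)..(ℓ m 0), ‖u0.edge m x‖ ^ 2) - Cm m * |t|)
          ≤ ∑ m, (∫ x in (0:ℝ)..(ℓ m t), ‖v m x‖ ^ 2) :=
        Finset.sum_le_sum (fun m _ => hvnorm m)
      rw [Finset.sum_sub_distrib, hsum, ← Finset.sum_mul] at hedge
      have hhalf : S * |t| ≤ 1 / 2 := by
        have h1 : S * |t| ≤ S * (1 / (2 * S)) :=
          mul_le_mul_of_nonneg_left htS hSpos.le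
        have h2 : S * (1 / (2 * S)) = 1 / 2 := by field_simp
        linarith
      linarith
    have h12 : (1 / 2 : ℝ) = Real.sqrt (1 / 4) := by
      rw [show (1 / 4 : ℝ) = (1 / 2) ^ 2 by norm_num, Real.sqrt_sq (by norm_num : (0:ℝ) ≤ 1/2)]
    rw [h12]
    exact Real.sqrt_le_sqrt hnormlow
  · -- defect bound
    have hdef : graphDefectSq G (fun m => ℓ m t) ((lam0:ℂ) ^ 2) ⟨u0.lead, v⟩
        ≤ (∑ m, (Cm m) ^ 2) * t ^ 2 := by
      unfold graphDefectSq
      dsimp only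
      have hlz : ∑ k, (∫ x in Set.Ioi (0:ℝ),
          ‖-(deriv (deriv (u0.lead k)) x) - ((lam0:ℂ)) ^ 2 * u0.lead k x‖ ^ 2) = 0 := by
        rw [Finset.sum_congr rfl (fun k _ => hleaddef k)]
        simp
      rw [hlz, zero_add]
      calc ∑ m, (∫ x in (0:ℝ)..(ℓ m t),
            ‖-(deriv (deriv (v m)) x) - ((lam0:ℂ)) ^ 2 * v m x‖ ^ 2)
          ≤ ∑ m, (Cm m) ^ 2 * t ^ 2 := Finset.sum_le_sum (fun m _ => hvdef m)
      _ = (∑ m, (Cm m) ^ 2) * t ^ 2 := by rw [Finset.sum_mul]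
    refine le_trans (Real.sqrt_le_sqrt hdef) ?_
    rw [Real.sqrt_mul (by positivity : (0:ℝ) ≤ ∑ m, (Cm m) ^ 2), Real.sqrt_sq_eq_abs]
    exact mul_le_mul_of_nonneg_right (le_max_right 1 Q) (abs_nonneg t)
end
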